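/- Define blocks x_i and integers b_i, l_i by: for i ≤ 5, x_i = (0,1), b_i = 2, l_i = 0; for i ≥ 6, x_i = P_{i,i²}, b_i = 2^i, l_i = 2^{4i²}. Let (E_1,E_2,...) be the concatenation l_1x_1 l_2x_2 l_3x_3 ..., let L_i = Σ_{j=1}^i l_j|x_j|, let q_n = b_i for L_{i−1} < n ≤ L_i, let Q = {q_n}, and let x = Σ_{n=1}^∞ E_n/(q_1···q_n). Then lim_{n→∞} T_{Q,n}(x) = 0, where T_{Q,n}(x) = q_1···q_n·x (mod 1). -/

import Mathlib

/-- The one-digit weighting `ν_b^{(1)}`: `1/2^b` for `j < b`, `(2^b - b)/2^b` for `j = b`,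
and `0` for `j > b`. -/
noncomputable def nu1 (b j : ℕ) : ℝ :=
  if j < b then 1 / 2 ^ b else if j = b then (2 ^ b - b) / 2 ^ b else 0

/-- The weighting `ν_b` of a block `B = (b_1, …, b_k)`: `∏_j ν_b^{(1)}(b_j)`. -/
noncomputable def nu (b : ℕ) (B : List ℕ) : ℝ := (B.map (nu1 b)).prod

/-- The `i`-th (0-indexed) block of length `w` in base `b`, in lexicographic order. -/
def lexBlock (b w i : ℕ) : List ℕ :=
  (List.range w).map (fun j => i / b ^ (w - 1 - j) % b)

/-- The block `P_{b,w}`: running over the blocks `P` of length `w` in base `b+1` in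
lexicographic order, concatenate `2^{bw}·ν_b(P) = (2^b - b)^{g_b(P)}` copies of each `P`. -/
def Pblock (b w : ℕ) : List ℕ :=
  ((List.range ((b + 1) ^ w)).map fun i =>
    (List.replicate ((2 ^ b - b) ^ ((lexBlock (b + 1) w i).count b))
      (lexBlock (b + 1) w i)).flatten).flatten

/-- The blocks of the construction: `x_i = (0,1)` for `i ≤ 5` and `x_i = P_{i,i²}` for `i ≥ 6`. -/
def xSeq (i : ℕ) : List ℕ := if i ≤ 5 then [0, 1] else Pblock i (i ^ 2)

/-- The bases of the construction: `b_i = 2` for `i ≤ 5` and `b_i = 2^i` for `i ≥ 6`. -/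
def bSeq (i : ℕ) : ℕ := if i ≤ 5 then 2 else 2 ^ i

/-- The repetition counts: `l_i = 0` for `i ≤ 5` and `l_i = 2^{4i²}` for `i ≥ 6`. -/
def lSeq (i : ℕ) : ℕ := if i ≤ 5 then 0 else 2 ^ (4 * i ^ 2)

/-- `L_i = Σ_{j=1}^i l_j·|x_j|`. -/
def Lsum (i : ℕ) : ℕ := ∑ j ∈ Finset.Icc 1 i, lSeq j * (xSeq j).length

/-- The concatenation `l_1x_1 l_2x_2 … l_ix_i` (a block of length `L_i`). -/
def prefixUpTo (i : ℕ) : List ℕ :=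
  ((List.range i).map fun j => (List.replicate (lSeq (j + 1)) (xSeq (j + 1))).flatten).flatten

/-- For `n ≥ 1`, the unique index `i` with `L_{i-1} < n ≤ L_i`. -/
noncomputable def iOf (n : ℕ) : ℕ := sInf {i | n ≤ Lsum i}

/-- The digit sequence `(E_1, E_2, …) = l_1x_1 l_2x_2 …` (1-indexed): `E n` is the `n`-th
entry of the infinite concatenation. -/
noncomputable def Edig (n : ℕ) : ℕ := (prefixUpTo (iOf n)).getD (n - 1) 0

/-- The basic sequence `Q` (1-indexed): `q_n = b_i` for `L_{i-1} < n ≤ L_i`. -/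
noncomputable def qSeq (n : ℕ) : ℕ := bSeq (iOf n)

/-- The real number `x = Σ_{n=1}^∞ E_n / (q_1 ⋯ q_n)`. -/
noncomputable def xVal : ℝ :=
  ∑' n : ℕ, (Edig (n + 1) : ℝ) / ∏ m ∈ Finset.range (n + 1), (qSeq (m + 1) : ℝ)

/-- `T_{Q,n}(x) = q_1 ⋯ q_n · x (mod 1)`. -/
noncomputable def TQ (q : ℕ → ℕ) (x : ℝ) (n : ℕ) : ℝ :=
  Int.fract ((∏ m ∈ Finset.range n, (q (m + 1) : ℝ)) * x)

/- ### auxiliary lemmas -/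

lemma Pblock_ne_nil {b w : ℕ} (hb : 6 ≤ b) (hw : 0 < w) : Pblock b w ≠ [] := by
  unfold Pblock
  intro h
  rw [List.flatten_eq_nil_iff] at h
  have h0 : (List.replicate ((2 ^ b - b) ^ ((lexBlock (b + 1) w 0).count b))
      (lexBlock (b + 1) w 0)).flatten = [] := by
    apply h
    refine List.mem_map.2 ⟨0, ?_, rfl⟩
    simp only [List.mem_range]
    positivity
  have hlex : lexBlock (b + 1) w 0 = List.replicate w 0 := by
    unfold lexBlock; rw [List.eq_replicate_iff]; simp
  rw [hlex] at h0
  have hcnt : (List.replicate w (0:ℕ)).count b = 0 := by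
    rw [List.count_replicate]; simp; omega
  rw [hcnt, pow_zero] at h0
  simp at h0
  omega

lemma mem_Pblock_le {b w x : ℕ} (hx : x ∈ Pblock b w) : x ≤ b := by
  unfold Pblock at hx
  rw [List.mem_flatten] at hx
  obtain ⟨l, hl, hxl⟩ := hx
  rw [List.mem_map] at hl
  obtain ⟨i, -, rfl⟩ := hl
  rw [List.mem_flatten] at hxl
  obtain ⟨l', hl', hxl'⟩ := hxl
  rw [List.eq_of_mem_replicate hl'] at hxl'
  unfold lexBlock at hxl'
  simp only [List.mem_map] at hxl'
  obtain ⟨j, -, rfl⟩ := hxl'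
  exact Nat.lt_succ_iff.mp (Nat.mod_lt _ (Nat.succ_pos b))

lemma xSeq_length_pos (i : ℕ) : 0 < (xSeq i).length := by
  unfold xSeq
  split
  · simp
  · next h =>
    rw [List.length_pos_iff_ne_nil]
    exact Pblock_ne_nil (by omega) (pow_pos (by omega) 2)

lemma mem_xSeq_le {i x : ℕ} (hi : 1 ≤ i) (hx : x ∈ xSeq i) : x ≤ i := by
  unfold xSeq at hx
  split at hx
  · simp only [List.mem_cons, List.mem_singleton, List.not_mem_nil, or_false] at hx
    rcases hx with rfl | rfl <;> omega
  · exact mem_Pblock_le hx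

lemma mem_prefixUpTo_le {i x : ℕ} (hx : x ∈ prefixUpTo i) : x ≤ i := by
  unfold prefixUpTo at hx
  rw [List.mem_flatten] at hx
  obtain ⟨l, hl, hxl⟩ := hx
  rw [List.mem_map] at hl
  obtain ⟨j, hj, rfl⟩ := hl
  rw [List.mem_flatten] at hxl
  obtain ⟨l', hl', hxl'⟩ := hxl
  rw [List.eq_of_mem_replicate hl'] at hxl'
  have := mem_xSeq_le (Nat.le_add_left 1 j) hxl'
  rw [List.mem_range] at hj
  omega

/- ### Lsum and iOf -/

lemma Lsum_succ (i : ℕ) : Lsum (i + 1) = Lsum i + lSeq (i + 1) * (xSeq (i + 1)).length := by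
  unfold Lsum
  rw [Finset.sum_Icc_succ_top (by omega : 1 ≤ i + 1)]

lemma Lsum_five : Lsum 5 = 0 := by decide

lemma Lsum_le_five {i : ℕ} (h : i ≤ 5) : Lsum i = 0 := by
  unfold Lsum
  refine Finset.sum_eq_zero fun j hj => ?_
  rw [Finset.mem_Icc] at hj
  have : lSeq j = 0 := by unfold lSeq; rw [if_pos]; omega
  rw [this, zero_mul]

lemma Lsum_mono : Monotone Lsum := by
  intro a b hab
  exact Finset.sum_le_sum_of_subset (Finset.Icc_subset_Icc_right hab)

lemma Lsum_step {i : ℕ} (h : 5 ≤ i) : Lsum i + 1 ≤ Lsum (i + 1) := by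
  rw [Lsum_succ]
  have h1 : 1 ≤ lSeq (i + 1) := by
    unfold lSeq; rw [if_neg (by omega)]; exact Nat.one_le_two_pow
  have h2 := xSeq_length_pos (i + 1)
  nlinarith

lemma Lsum_add_le {i : ℕ} (h : 5 ≤ i) (t : ℕ) : Lsum i + t ≤ Lsum (i + t) := by
  induction t with
  | zero => simp
  | succ t ih =>
      calc Lsum i + (t + 1) ≤ Lsum (i + t) + 1 := by omega
        _ ≤ Lsum (i + t + 1) := Lsum_step (by omega)

lemma setOf_nonempty (n : ℕ) : {i | n ≤ Lsum i}.Nonempty := by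
  refine ⟨5 + n, ?_⟩
  have := Lsum_add_le (le_refl 5) n
  simp only [Set.mem_setOf_eq]
  rw [Lsum_five] at this
  omega

lemma le_Lsum_iOf (n : ℕ) : n ≤ Lsum (iOf n) := Nat.sInf_mem (setOf_nonempty n)

lemma iOf_le {n i : ℕ} (h : n ≤ Lsum i) : iOf n ≤ i := Nat.sInf_le h

lemma six_le_iOf {n : ℕ} (h : 1 ≤ n) : 6 ≤ iOf n := by
  by_contra hc
  have := le_Lsum_iOf n
  rw [Lsum_le_five (by omega)] at this
  omega

lemma iOf_mono : Monotone iOf := by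
  intro a b hab
  exact iOf_le (le_trans hab (le_Lsum_iOf b))

lemma iOf_add_le {n : ℕ} (h : 1 ≤ n) (t : ℕ) : iOf (n + t) ≤ iOf n + t := by
  apply iOf_le
  calc n + t ≤ Lsum (iOf n) + t := by have := le_Lsum_iOf n; omega
    _ ≤ Lsum (iOf n + t) := Lsum_add_le (by have := six_le_iOf h; omega) t

lemma iOf_tendsto : Filter.Tendsto iOf Filter.atTop Filter.atTop := by
  rw [Filter.tendsto_atTop]
  intro b
  rw [Filter.eventually_atTop]
  refine ⟨Lsum b + 1, fun n hn => ?_⟩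
  by_contra hc
  have h1 : Lsum (iOf n) ≤ Lsum b := Lsum_mono (by omega)
  have := le_Lsum_iOf n
  omega

lemma Edig_le (n : ℕ) : Edig n ≤ iOf n := by
  unfold Edig
  rcases lt_or_ge (n - 1) (prefixUpTo (iOf n)).length with h | h
  · rw [List.getD_eq_getElem _ _ h]
    exact mem_prefixUpTo_le (List.getElem_mem h)
  · rw [List.getD_eq_default _ _ h]
    exact Nat.zero_le _

lemma qSeq_eq {n : ℕ} (h : 1 ≤ n) : qSeq n = 2 ^ iOf n := by
  unfold qSeq bSeq
  rw [if_neg]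
  have := six_le_iOf h
  omega

/- ### real-analytic part -/

lemma two_le_qSeq (k : ℕ) : 2 ≤ qSeq k := by
  unfold qSeq bSeq
  split
  · exact le_refl 2
  · next h =>
    calc 2 = 2 ^ 1 := rfl
      _ ≤ 2 ^ iOf k := Nat.pow_le_pow_right (by omega) (by omega)

noncomputable def tailTerm (n t : ℕ) : ℝ :=
  (Edig (n + t + 1) : ℝ) / ∏ k ∈ Finset.Ico n (n + t + 1), (qSeq (k + 1) : ℝ)

lemma denom_pos (n t : ℕ) : (0:ℝ) < ∏ k ∈ Finset.Ico n (n + t + 1), (qSeq (k + 1) : ℝ) := by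
  apply Finset.prod_pos
  intro k _
  have := two_le_qSeq (k + 1)
  positivity

lemma tailTerm_nonneg (n t : ℕ) : 0 ≤ tailTerm n t := by
  unfold tailTerm
  have := denom_pos n t
  positivity

lemma denom_ge (n t : ℕ) :
    ((2:ℝ) ^ iOf (n + 1)) ^ (t + 1) ≤ ∏ k ∈ Finset.Ico n (n + t + 1), (qSeq (k + 1) : ℝ) := by
  have hcard : (Finset.Ico n (n + t + 1)).card = t + 1 := by
    rw [Nat.card_Ico]; omega
  calc ((2:ℝ) ^ iOf (n + 1)) ^ (t + 1)
      = ∏ _k ∈ Finset.Ico n (n + t + 1), (2:ℝ) ^ iOf (n + 1) := by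
        rw [Finset.prod_const, hcard]
    _ ≤ ∏ k ∈ Finset.Ico n (n + t + 1), (qSeq (k + 1) : ℝ) := by
        apply Finset.prod_le_prod
        · intro k _; positivity
        · intro k hk
          rw [Finset.mem_Ico] at hk
          rw [qSeq_eq (by omega : 1 ≤ k + 1)]
          push_cast
          apply pow_le_pow_right₀ (by norm_num)
          exact iOf_mono (by omega)

lemma numer_le (n t : ℕ) :
    (Edig (n + t + 1) : ℝ) ≤ (iOf (n + 1) : ℝ) * 2 ^ t := by
  have h1 : Edig (n + t + 1) ≤ iOf (n + 1) + t := by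
    have h2 := Edig_le (n + t + 1)
    have h3 : iOf (n + t + 1) ≤ iOf (n + 1) + t := by
      have := iOf_add_le (by omega : 1 ≤ n + 1) t
      have he : n + 1 + t = n + t + 1 := by omega
      rw [he] at this
      exact this
    omega
  have h4 : 1 ≤ iOf (n + 1) := by have := six_le_iOf (by omega : 1 ≤ n + 1); omega
  have h5 : t + 1 ≤ 2 ^ t := Nat.lt_two_pow_self
  have h6 : Edig (n + t + 1) ≤ iOf (n + 1) * 2 ^ t := by nlinarith
  calc (Edig (n + t + 1) : ℝ) ≤ ((iOf (n + 1) * 2 ^ t : ℕ) : ℝ) := by exact_mod_cast h6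
    _ = (iOf (n + 1) : ℝ) * 2 ^ t := by push_cast; ring

lemma tailTerm_le (n t : ℕ) :
    tailTerm n t ≤ ((iOf (n + 1) : ℝ) / 2 ^ iOf (n + 1)) * (2 / 2 ^ iOf (n + 1)) ^ t := by
  set i := iOf (n + 1) with hi
  have hb : (0:ℝ) < (2 ^ i) ^ (t + 1) := by positivity
  have key : ((i : ℝ) / 2 ^ i) * (2 / 2 ^ i) ^ t = ((i:ℝ) * 2 ^ t) / ((2:ℝ) ^ i) ^ (t + 1) := by
    rw [div_pow, div_mul_div_comm, pow_succ']
  rw [key]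
  unfold tailTerm
  exact div_le_div₀ (by positivity) (numer_le n t) hb (denom_ge n t)

lemma ratio_nonneg (n : ℕ) : (0:ℝ) ≤ 2 / 2 ^ iOf (n + 1) := by positivity

lemma ratio_le_half (n : ℕ) : 2 / 2 ^ iOf (n + 1) ≤ (2:ℝ)⁻¹ := by
  have h6 : 6 ≤ iOf (n + 1) := six_le_iOf (by omega)
  have h : (2:ℝ) ^ 6 ≤ 2 ^ iOf (n + 1) := pow_le_pow_right₀ (by norm_num) h6
  rw [div_le_iff₀ (by positivity)]
  nlinarith

lemma geo_summable (n : ℕ) :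
    Summable (fun t => ((iOf (n + 1) : ℝ) / 2 ^ iOf (n + 1)) * (2 / 2 ^ iOf (n + 1)) ^ t) := by
  apply Summable.mul_left
  apply summable_geometric_of_lt_one (ratio_nonneg n)
  have := ratio_le_half n
  linarith

lemma tailTerm_summable (n : ℕ) : Summable (tailTerm n) :=
  Summable.of_nonneg_of_le (tailTerm_nonneg n) (tailTerm_le n) (geo_summable n)

noncomputable def tailSum (n : ℕ) : ℝ := ∑' t, tailTerm n t

lemma tailSum_nonneg (n : ℕ) : 0 ≤ tailSum n :=
  tsum_nonneg (tailTerm_nonneg n)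

lemma tailSum_le (n : ℕ) :
    tailSum n ≤ 2 * (iOf (n + 1) : ℝ) / 2 ^ iOf (n + 1) := by
  have h1 : tailSum n ≤ ∑' t, ((iOf (n + 1) : ℝ) / 2 ^ iOf (n + 1)) * (2 / 2 ^ iOf (n + 1)) ^ t :=
    Summable.tsum_le_tsum (tailTerm_le n) (tailTerm_summable n) (geo_summable n)
  have h2 : ∑' t : ℕ, ((iOf (n + 1) : ℝ) / 2 ^ iOf (n + 1)) * (2 / 2 ^ iOf (n + 1)) ^ t
      = ((iOf (n + 1) : ℝ) / 2 ^ iOf (n + 1)) * (1 - 2 / 2 ^ iOf (n + 1))⁻¹ := by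
    rw [tsum_mul_left, tsum_geometric_of_lt_one (ratio_nonneg n)
      (lt_of_le_of_lt (ratio_le_half n) (by norm_num))]
  have h3 : ((1:ℝ) - 2 / 2 ^ iOf (n + 1))⁻¹ ≤ 2 := by
    have hr := ratio_le_half n
    have hpos : (0:ℝ) < 1 - 2 / 2 ^ iOf (n + 1) := by linarith [ratio_le_half n]
    rw [inv_le_comm₀ hpos (by norm_num : (0:ℝ) < 2)]
    norm_num
    linarith
  have h4 : (0:ℝ) ≤ (iOf (n + 1) : ℝ) / 2 ^ iOf (n + 1) := by positivity
  calc tailSum n ≤ ((iOf (n + 1) : ℝ) / 2 ^ iOf (n + 1)) * (1 - 2 / 2 ^ iOf (n + 1))⁻¹ := by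
        rw [← h2]; exact h1
    _ ≤ ((iOf (n + 1) : ℝ) / 2 ^ iOf (n + 1)) * 2 := by
        exact mul_le_mul_of_nonneg_left h3 h4
    _ = 2 * (iOf (n + 1) : ℝ) / 2 ^ iOf (n + 1) := by ring

lemma two_mul_lt_two_pow {i : ℕ} (h : 6 ≤ i) : 2 * i < 2 ^ i := by
  induction i with
  | zero => omega
  | succ i ih =>
      rcases Nat.lt_or_ge i 6 with h6 | h6
      · interval_cases i <;> simp_all
      · have := ih (by omega)
        have h2 : 2 ^ i ≥ 64 := by calc (64:ℕ) = 2^6 := by norm_num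
                                     _ ≤ 2 ^ i := Nat.pow_le_pow_right (by omega) h6
        rw [pow_succ]
        omega

lemma tailSum_lt_one (n : ℕ) : tailSum n < 1 := by
  have h6 : 6 ≤ iOf (n + 1) := six_le_iOf (by omega)
  have h := two_mul_lt_two_pow h6
  have hs := tailSum_le n
  have hR : 2 * (iOf (n + 1) : ℝ) / 2 ^ iOf (n + 1) < 1 := by
    rw [div_lt_one (by positivity)]
    calc 2 * (iOf (n + 1) : ℝ) = ((2 * iOf (n + 1) : ℕ) : ℝ) := by push_cast; ring
      _ < ((2 ^ iOf (n + 1) : ℕ) : ℝ) := by exact_mod_cast h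
      _ = (2:ℝ) ^ iOf (n + 1) := by push_cast; ring
  linarith

noncomputable def Pprod (n : ℕ) : ℝ := ∏ m ∈ Finset.range n, (qSeq (m + 1) : ℝ)

lemma Pprod_pos (n : ℕ) : 0 < Pprod n := by
  apply Finset.prod_pos
  intro k _
  have := two_le_qSeq (k + 1)
  positivity

lemma base_eq_tail0 : (fun m => (Edig (m + 1) : ℝ) / Pprod (m + 1)) = tailTerm 0 := by
  funext m
  unfold tailTerm Pprod
  rw [Finset.range_eq_Ico]
  norm_num

lemma base_summable : Summable (fun m => (Edig (m + 1) : ℝ) / Pprod (m + 1)) := by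
  rw [base_eq_tail0]; exact tailTerm_summable 0

lemma xVal_eq : xVal = ∑' m, (Edig (m + 1) : ℝ) / Pprod (m + 1) := rfl

lemma TQ_eq_tailSum (n : ℕ) : TQ qSeq xVal n = tailSum n := by
  have hP : Pprod n ≠ 0 := ne_of_gt (Pprod_pos n)
  have hsum := base_summable
  have hmul : Pprod n * xVal = ∑' m, Pprod n * ((Edig (m + 1) : ℝ) / Pprod (m + 1)) := by
    rw [xVal_eq, tsum_mul_left]
  have hsplit := Summable.sum_add_tsum_nat_add n (hsum.mul_left (Pprod n))
  -- shifted part equals tailTerm n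
  have hshift : ∀ t : ℕ, Pprod n * ((Edig (t + n + 1) : ℝ) / Pprod (t + n + 1))
      = tailTerm n t := by
    intro t
    have hD := denom_pos n t
    have he : t + n + 1 = n + t + 1 := by omega
    rw [he]
    have hPt : Pprod (n + t + 1) = Pprod n * ∏ k ∈ Finset.Ico n (n + t + 1), (qSeq (k + 1) : ℝ) := by
      unfold Pprod
      rw [Finset.prod_range_mul_prod_Ico _ (by omega : n ≤ n + t + 1)]
    rw [hPt]
    unfold tailTerm
    field_simp
  -- finite part is an integer
  set N : ℕ := ∑ m ∈ Finset.range n, Edig (m + 1) * ∏ k ∈ Finset.Ico (m + 1) n, qSeq (k + 1) with hN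
  have hfin : ∑ m ∈ Finset.range n, Pprod n * ((Edig (m + 1) : ℝ) / Pprod (m + 1)) = (N : ℝ) := by
    rw [hN]
    push_cast
    apply Finset.sum_congr rfl
    intro m hm
    rw [Finset.mem_range] at hm
    have hPm : Pprod n = Pprod (m + 1) * ∏ k ∈ Finset.Ico (m + 1) n, (qSeq (k + 1) : ℝ) := by
      unfold Pprod
      rw [Finset.prod_range_mul_prod_Ico _ (by omega : m + 1 ≤ n)]
    have hPm1 : Pprod (m + 1) ≠ 0 := ne_of_gt (Pprod_pos (m + 1))
    rw [hPm]
    field_simp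
  have htail : ∑' t, Pprod n * ((Edig (t + n + 1) : ℝ) / Pprod (t + n + 1)) = tailSum n := by
    unfold tailSum
    exact tsum_congr hshift
  have hx : Pprod n * xVal = (N : ℝ) + tailSum n := by
    rw [hmul, ← hsplit, hfin, ← htail]
  unfold TQ
  have hPp : (∏ m ∈ Finset.range n, (qSeq (m + 1) : ℝ)) = Pprod n := rfl
  rw [hPp, hx]
  rw [show ((N : ℝ) = ((N : ℤ) : ℝ)) by push_cast; ring, Int.fract_intCast_add]
  exact Int.fract_eq_self.mpr ⟨tailSum_nonneg n, tailSum_lt_one n⟩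

lemma bound_tendsto : Filter.Tendsto (fun i : ℕ => 2 * (i : ℝ) / 2 ^ i) Filter.atTop (nhds 0) := by
  have hs : Summable (fun i : ℕ => (i : ℝ) ^ 1 * (2⁻¹ : ℝ) ^ i) :=
    summable_pow_mul_geometric_of_norm_lt_one 1 (by rw [Real.norm_eq_abs, abs_of_pos] <;> norm_num)
  have h := (hs.mul_left 2).tendsto_atTop_zero
  have heq : (fun i : ℕ => 2 * ((i : ℝ) ^ 1 * (2⁻¹ : ℝ) ^ i)) = fun i : ℕ => 2 * (i : ℝ) / 2 ^ i := by
    funext i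
    rw [pow_one, inv_pow]
    field_simp
  rwa [heq] at h


/-- For the construction `x_i = (0,1)`, `b_i = 2`, `l_i = 0` for `i ≤ 5` and
`x_i = P_{i,i²}`, `b_i = 2^i`, `l_i = 2^{4i²}` for `i ≥ 6`, one has
`lim_{n→∞} T_{Q,n}(x) = 0`. -/
theorem stmt7 : Filter.Tendsto (fun n => TQ qSeq xVal n) Filter.atTop (nhds 0) := by
  have hcomp : Filter.Tendsto (fun n => 2 * (iOf (n + 1) : ℝ) / 2 ^ iOf (n + 1))
      Filter.atTop (nhds 0) :=
    bound_tendsto.comp (iOf_tendsto.comp (Filter.tendsto_add_atTop_nat 1))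
  refine squeeze_zero (fun n => ?_) (fun n => ?_) hcomp
  · rw [TQ_eq_tailSum]; exact tailSum_nonneg n
  · rw [TQ_eq_tailSum]; exact tailSum_le n
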